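/- In the one-mode interacting Fock space setting: let μ be a nonzero symmetric finite measure on ℝ with finite moments of all orders, (P_n)_{n≥0} its monic orthogonal polynomials with three-term recursion t P_n = P_{n+1} + k_n P_{n−1} (P_0 = 1, P_1 = t, k_n ≥ 0). Then ∫ P_m P_n dμ = δ_{m,n} ℓ_n where ℓ_n = k_n ⋯ k_1 · ℓ_0 with ℓ_0 = μ(ℝ), and the map e_n ↦ P_n extends to an isometry from the one-mode interacting Fock space with weights ℓ_n into L²(μ), under which a* + a acts as multiplication by t on span{P_n}. -/

import Mathlib

open MeasureTheory Polynomial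

/-- Let `μ` be a nonzero symmetric finite measure on `ℝ` with finite
moments of all orders, and `(P_n)` its monic orthogonal polynomials (`deg P_n = n`,
`P_0 = 1`, `P_1 = X`) with the three-term recursion `t·P_n = P_{n+1} + k_n P_{n-1}`
(`k_n ≥ 0`, `n ≥ 1`).  Then `∫ P_m P_n dμ = δ_{m,n} ℓ_n` where
`ℓ_n = k_n ⋯ k_1 · ℓ_0` and `ℓ_0 = μ(ℝ)`.  Hence `e_n ↦ P_n` extends to an isometry
from the one-mode interacting Fock space with weights `ℓ_n` (where
`⟨e_m, e_n⟩ = δ_{m,n} ℓ_n`) into `L²(μ)`, under which `a* + a` (with `a* e_n = e_{n+1}`,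
`a e_n = k_n e_{n-1}`) acts as multiplication by `t` on `span{P_n}`:
`(a* + a) e_n ↦ P_{n+1} + k_n P_{n-1} = t·P_n`. -/
theorem one_mode_orthogonal_polynomials
    (μ : Measure ℝ) [IsFiniteMeasure μ] (hμ : μ ≠ 0)
    (hsymm : Measure.map (fun t : ℝ => -t) μ = μ)
    (hmom : ∀ n : ℕ, Integrable (fun t : ℝ => |t| ^ n) μ)
    (P : ℕ → Polynomial ℝ)
    (hmonic : ∀ n, (P n).Monic) (hdeg : ∀ n, (P n).natDegree = n)
    (hP0 : P 0 = 1) (hP1 : P 1 = X)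
    (k : ℕ → ℝ) (hk : ∀ n, 0 ≤ k n)
    (hrec : ∀ n : ℕ, 1 ≤ n → X * P n = P (n + 1) + C (k n) * P (n - 1))
    (horth : ∀ m n : ℕ, m ≠ n → ∫ t, (P m).eval t * (P n).eval t ∂μ = 0) :
    (∀ m n : ℕ, ∫ t, (P m).eval t * (P n).eval t ∂μ =
      if m = n then (∏ i ∈ Finset.Icc 1 n, k i) * (μ Set.univ).toReal else 0) ∧
    (∀ n : ℕ, 1 ≤ n → ∀ t : ℝ,
      (P (n + 1)).eval t + k n * (P (n - 1)).eval t = t * (P n).eval t) := by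
  -- Every polynomial is integrable with respect to μ
  have hint : ∀ p : Polynomial ℝ, Integrable (fun t => p.eval t) μ := by
    intro p
    have hi : ∀ i : ℕ, Integrable (fun t : ℝ => p.coeff i * t ^ i) μ := by
      intro i
      have h1 : Integrable (fun t : ℝ => t ^ i) μ := by
        refine (hmom i).mono' ((measurable_id.pow_const i).aestronglyMeasurable) ?_
        filter_upwards with t
        simp [abs_pow]
      exact h1.const_mul _
    have heq : (fun t : ℝ => p.eval t)
        = fun t => ∑ i ∈ Finset.range (p.natDegree + 1), p.coeff i * t ^ i := by
      funext t; exact p.eval_eq_sum_range t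
    rw [heq]
    exact integrable_finset_sum _ (fun i _ => hi i)
  have hintPP : ∀ p q : Polynomial ℝ, Integrable (fun t => p.eval t * q.eval t) μ := by
    intro p q
    simpa using hint (p * q)
  have hintXPP : ∀ p q : Polynomial ℝ,
      Integrable (fun t => t * p.eval t * q.eval t) μ := by
    intro p q
    have h := hint (X * (p * q))
    simp only [eval_mul, eval_X] at h
    simpa [mul_assoc] using h
  -- evaluated form of the recursion
  have hreceval : ∀ n : ℕ, 1 ≤ n → ∀ t : ℝ,
      t * (P n).eval t = (P (n + 1)).eval t + k n * (P (n - 1)).eval t := by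
    intro n hn t
    have h := congrArg (Polynomial.eval t) (hrec n hn)
    simpa using h
  -- key step relation
  have step : ∀ m : ℕ, ∫ t, (P (m + 1)).eval t * (P (m + 1)).eval t ∂μ
      = k (m + 1) * ∫ t, (P m).eval t * (P m).eval t ∂μ := by
    intro m
    have h1 : ∫ t, (P (m + 1)).eval t * (P (m + 1)).eval t ∂μ
        = ∫ t, (t * (P m).eval t) * (P (m + 1)).eval t ∂μ := by
      cases m with
      | zero => simp [hP0, hP1]
      | succ m' =>
        have hrw : (fun t => (t * (P (m' + 1)).eval t) * (P (m' + 2)).eval t)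
            = fun t => (P (m' + 2)).eval t * (P (m' + 2)).eval t
              + k (m' + 1) * ((P m').eval t * (P (m' + 2)).eval t) := by
          funext t
          have h := hreceval (m' + 1) (Nat.le_add_left 1 m') t
          simp only [Nat.add_sub_cancel] at h
          linear_combination eval t (P (m' + 2)) * h
        rw [hrw, integral_add (hintPP _ _) ((hintPP (P m') (P (m' + 2))).const_mul _),
          integral_const_mul, horth m' (m' + 2) (by omega)]
        ring
    have h2 : ∫ t, (t * (P m).eval t) * (P (m + 1)).eval t ∂μ
        = ∫ t, (P m).eval t * (P (m + 2)).eval t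
            + k (m + 1) * ((P m).eval t * (P m).eval t) ∂μ := by
      congr 1
      funext t
      have h := hreceval (m + 1) (Nat.le_add_left 1 m) t
      simp only [Nat.add_sub_cancel] at h
      linear_combination eval t (P m) * h
    rw [h1, h2, integral_add (hintPP _ _) ((hintPP (P m) (P m)).const_mul _),
      integral_const_mul, horth m (m + 2) (by omega)]
    ring
  -- diagonal values
  have diag : ∀ n : ℕ, ∫ t, (P n).eval t * (P n).eval t ∂μ
      = (∏ i ∈ Finset.Icc 1 n, k i) * (μ Set.univ).toReal := by
    intro n
    induction n with
    | zero => simp [hP0]; rfl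
    | succ n ih =>
      rw [step n, ih, Finset.prod_Icc_succ_top (Nat.le_add_left 1 n)]
      ring
  refine ⟨fun m n => ?_, fun n hn t => (hreceval n hn t).symm⟩
  by_cases h : m = n
  · subst h; simp [diag m]
  · simp [h, horth m n h]
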